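/- With Q a family of subgroups satisfying (para 0.2) and (para 0.4), and I = (G × A)/∼ the resulting quotient with G acting by g'·[g,a] = [g'g, a], the canonical map ι : A → I, a ↦ [1,a] is injective if and only if for every a ∈ A, Q(a) ∩ N = Fix_N(a) (condition (para inj)). -/
import Mathlib


/-- The relation defining the hovel as a quotient of G × A. -/
def hovelRel {G A : Type*} [Group G] (N : Subgroup G) [MulAction N A]
    (Q : A → Subgroup G) : G × A → G × A → Prop :=
  fun p q => ∃ n : N, q.2 = n • p.2 ∧ p.1⁻¹ * q.1 * (n : G) ∈ Q p.2

theorem hovelRel_equiv {G A : Type*} [Group G] (N : Subgroup G) [MulAction N A]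
    (Q : A → Subgroup G)
    (h04 : ∀ (m : N) (a : A),
      (fun x => (m : G) * x * (m : G)⁻¹) '' (Q a : Set G) = (Q (m • a) : Set G)) :
    Equivalence (hovelRel N Q) := by
  constructor
  · intro p
    exact ⟨1, by simp, by simpa using one_mem (Q p.2)⟩
  · rintro ⟨g, a⟩ ⟨h, b⟩ ⟨n, hb, hq⟩
    replace hb : b = n • a := hb
    replace hq : g⁻¹ * h * (n : G) ∈ Q a := hq
    refine ⟨n⁻¹, by rw [hb, inv_smul_smul], ?_⟩
    have key : h⁻¹ * g * ((n⁻¹ : N) : G) ∈ (fun x => (n : G) * x * (n : G)⁻¹) '' (Q a : Set G) := by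
      refine ⟨(g⁻¹ * h * n)⁻¹, inv_mem hq, ?_⟩
      push_cast
      group
    rw [h04 n a] at key
    show h⁻¹ * g * ((n⁻¹ : N) : G) ∈ Q b
    rw [hb]
    exact key
  · rintro ⟨g, a⟩ ⟨h, b⟩ ⟨k, c⟩ ⟨n, hb, hq⟩ ⟨m, hc, hq'⟩
    replace hb : b = n • a := hb
    replace hq : g⁻¹ * h * (n : G) ∈ Q a := hq
    replace hc : c = m • b := hc
    replace hq' : h⁻¹ * k * (m : G) ∈ Q b := hq'
    refine ⟨m * n, show c = (m * n) • a by rw [hc, hb, mul_smul], ?_⟩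
    have hq'' : h⁻¹ * k * (m : G) ∈ (Q (n • a) : Set G) := hb ▸ hq'
    rw [← h04 n a] at hq''
    obtain ⟨x, hx, hx'⟩ := hq''
    show g⁻¹ * k * ((m * n : N) : G) ∈ Q a
    have hxe : x = (n : G)⁻¹ * (h⁻¹ * k * m) * n := by rw [← hx']; group
    have : g⁻¹ * k * ((m * n : N) : G) = (g⁻¹ * h * n) * x := by
      rw [hxe]; push_cast; group
    rw [this]
    exact mul_mem hq hx

/-- The canonical map A → I = (G × A)/∼, a ↦ [1,a], is injective iff
Q(a) ∩ N = Fix_N(a) for all a (condition (para inj)). -/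
theorem hovel_injectivity_iff {G A : Type*} [Group G]
    (N : Subgroup G) [MulAction N A] (Q : A → Subgroup G)
    (h02 : ∀ (a : A) (m : N), m • a = a → (m : G) ∈ Q a)
    (h04 : ∀ (m : N) (a : A),
      (fun x => (m : G) * x * (m : G)⁻¹) '' (Q a : Set G) = (Q (m • a) : Set G)) :
    Function.Injective (fun a : A => Quot.mk (hovelRel N Q) ((1 : G), a)) ↔
      ∀ a : A, {m : N | (m : G) ∈ Q a} = {m : N | m • a = a} := by
  have heq := hovelRel_equiv N Q h04
  constructor
  · intro hinj a
    ext m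
    simp only [Set.mem_setOf_eq]
    constructor
    · intro hm
      have : Quot.mk (hovelRel N Q) ((1 : G), a) = Quot.mk (hovelRel N Q) ((1 : G), m • a) :=
        Quot.sound ⟨m, rfl, by simpa using hm⟩
      exact (hinj this).symm
    · exact h02 a m
  · intro hcond a b hab
    simp only at hab
    rw [Quot.eq, Equivalence.eqvGen_iff heq] at hab
    obtain ⟨n, hb, hq⟩ := hab
    replace hb : b = n • a := hb
    replace hq : (1 : G)⁻¹ * 1 * (n : G) ∈ Q a := hq
    have hna : n • a = a := (Set.ext_iff.mp (hcond a) n).mp (by simpa using hq)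
    rw [hb, hna]
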